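/- For every B > 0 there exists a constant C > 0 depending only on B such that the following holds. Let ζ ∈ Γ_B and let X ∈ ℝ^n be a random vector whose coordinates are i.i.d. copies of ζ. Let M be an n×n real symmetric matrix, u ∈ ℝ^n, t ∈ ℝ, s ≥ 0 and δ > 0. Then ℙ( |⟨M X, X⟩ − t| < δ and ⟨X, u⟩ ≥ s ) ≤ C δ e^{-s} ∫_{−1/δ}^{1/δ} | 𝔼 e^{2πi θ ⟨M X, X⟩ + ⟨X, u⟩} | dθ. -/

import Mathlib

open MeasureTheory ProbabilityTheory Matrix
open scoped BigOperators ENNReal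

noncomputable section

/-- Euclidean norm of a finitely indexed real vector. -/
def euclNorm {ι : Type*} [Fintype ι] (x : ι → ℝ) : ℝ :=
  Real.sqrt (∑ i, (x i) ^ 2)

/-- The least singular value of a square real matrix:
`σ_min(M) = inf { ‖Mx‖₂ : ‖x‖₂ = 1 }`. -/
def sigmaMin {n : ℕ} (M : Matrix (Fin n) (Fin n) ℝ) : ℝ :=
  sInf {r : ℝ | ∃ x : Fin n → ℝ, euclNorm x = 1 ∧ r = euclNorm (M.mulVec x)}

/-- `ζ ∈ Γ_B`: a measurable real random variable with mean `0`, variance `1`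
and subgaussian moment `‖ζ‖_{ψ₂} ≤ B`, i.e. `(𝔼|ζ|^p)^{1/p} ≤ B √p` for all `p ≥ 1`. -/
def MemGammaB {Ω : Type*} [MeasurableSpace Ω] (μ : Measure Ω) (ζ : Ω → ℝ) (B : ℝ) : Prop :=
  Measurable ζ ∧ (∫ ω, ζ ω ∂μ) = 0 ∧ (∫ ω, (ζ ω) ^ 2 ∂μ) = 1 ∧
    ∀ p : ℝ, 1 ≤ p → (∫⁻ ω, ENNReal.ofReal (|ζ ω| ^ p) ∂μ) ≤ ENNReal.ofReal ((B * Real.sqrt p) ^ p)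

/-- `A ~ Sym_n(ζ)`: a random `n × n` real symmetric matrix whose entries on and above
the diagonal are i.i.d. copies of `ζ`. -/
def IsSymRandomMatrix {Ω : Type*} [MeasurableSpace Ω] (μ : Measure Ω) (ζ : Ω → ℝ)
    {n : ℕ} (A : Ω → Matrix (Fin n) (Fin n) ℝ) : Prop :=
  (∀ i j, Measurable fun ω => A ω i j) ∧
  (∀ ω, (A ω).IsSymm) ∧
  (∀ i j : Fin n, i ≤ j → Measure.map (fun ω => A ω i j) μ = Measure.map ζ μ) ∧
  iIndepFun
    (fun p : {p : Fin n × Fin n // p.1 ≤ p.2} => fun ω => A ω p.1.1 p.1.2) μ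

/-- Distance from `w ∈ ℝ^ι` to the integer lattice `ℤ^ι` (Euclidean distance;
coordinatewise the nearest integer is `round`). -/
def torusNorm {ι : Type*} [Fintype ι] (w : ι → ℝ) : ℝ :=
  Real.sqrt (∑ i, (w i - (round (w i) : ℝ)) ^ 2)

/-- The least common denominator
`D_{α,γ}(v) = inf{ φ > 0 : ‖φ v‖_T ≤ min(γ φ ‖v‖₂, √(α n)) }`. -/
def LCD {ι : Type*} [Fintype ι] (α γ : ℝ) (v : ι → ℝ) : ℝ :=
  sInf {φ : ℝ | 0 < φ ∧
    torusNorm (φ • v) ≤ min (γ * φ * euclNorm v) (Real.sqrt (α * (Fintype.card ι)))}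

/-- A random vector with i.i.d. coordinates distributed as `ζ`. -/
def IsIIDVector {Ω : Type*} [MeasurableSpace Ω] (μ : Measure Ω) (ζ : Ω → ℝ)
    {ι : Type*} (X : ι → Ω → ℝ) : Prop :=
  (∀ i, Measurable (X i)) ∧ (∀ i, Measure.map (X i) μ = Measure.map ζ μ) ∧
  iIndepFun X μ

section AuxLemmas


lemma pow_self_le_exp_pow_mul_factorial (m : ℕ) :
    (m : ℝ) ^ m ≤ Real.exp 1 ^ m * m.factorial := by
  induction m with
  | zero => simp
  | succ m ih =>
    rcases Nat.eq_zero_or_pos m with hm | hm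
    · subst hm
      have h1 : (1:ℝ) ≤ Real.exp 1 := Real.one_le_exp (by norm_num)
      norm_num [Nat.factorial]
    · have hm0 : (0:ℝ) < m := by exact_mod_cast hm
      have h1 : ((m:ℝ) + 1) ^ m ≤ Real.exp 1 * (m:ℝ) ^ m := by
        have h2 : ((m:ℝ) + 1) / m ≤ Real.exp (1 / m) := by
          have h := Real.add_one_le_exp (1 / (m:ℝ))
          rw [add_div, div_self (ne_of_gt hm0)]
          linarith
        have h3 : (((m:ℝ) + 1) / m) ^ m ≤ Real.exp (1 / m) ^ m := by
          apply pow_le_pow_left₀ (by positivity) h2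
        rw [← Real.exp_nat_mul] at h3
        have hmm : (m:ℝ) * (1 / m) = 1 := by field_simp
        rw [hmm] at h3
        calc ((m:ℝ) + 1) ^ m = (((m:ℝ) + 1) / m) ^ m * (m:ℝ) ^ m := by
              rw [div_pow]; field_simp
          _ ≤ Real.exp 1 * (m:ℝ) ^ m := by
              apply mul_le_mul_of_nonneg_right h3 (by positivity)
      have hfac : ((m + 1 : ℕ).factorial : ℝ) = ((m:ℝ) + 1) * m.factorial := by
        push_cast [Nat.factorial_succ]; ring
      calc ((m + 1 : ℕ) : ℝ) ^ (m + 1) = ((m:ℝ) + 1) ^ m * ((m:ℝ) + 1) := by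
            push_cast; rw [pow_succ]
        _ ≤ (Real.exp 1 * (m:ℝ) ^ m) * ((m:ℝ) + 1) := by
            apply mul_le_mul_of_nonneg_right h1 (by positivity)
        _ ≤ (Real.exp 1 * (Real.exp 1 ^ m * m.factorial)) * ((m:ℝ) + 1) := by
            have : (0:ℝ) ≤ (m:ℝ) + 1 := by positivity
            apply mul_le_mul_of_nonneg_right _ this
            exact mul_le_mul_of_nonneg_left ih (Real.exp_pos 1).le
        _ = Real.exp 1 ^ (m + 1) * ((m + 1 : ℕ).factorial : ℝ) := by
            rw [hfac]; ring

lemma integrable_exp_of_moments {Ω : Type*} [MeasurableSpace Ω] {μ : Measure Ω}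
    [IsProbabilityMeasure μ] {ζ : Ω → ℝ} {B : ℝ} (hB : 0 < B) (hmeas : Measurable ζ)
    (hmom : ∀ p : ℝ, 1 ≤ p →
      (∫⁻ ω, ENNReal.ofReal (|ζ ω| ^ p) ∂μ) ≤ ENNReal.ofReal ((B * Real.sqrt p) ^ p))
    (c : ℝ) : Integrable (fun ω => Real.exp (c * ζ ω)) μ := by
  set lam : ℝ := (4 * Real.exp 1 * B ^ 2)⁻¹ with hlam_def
  have hlam : 0 < lam := by positivity
  -- even moment bound
  have hmom2 : ∀ m : ℕ, 1 ≤ m →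
      (∫⁻ ω, ENNReal.ofReal ((ζ ω ^ 2) ^ m) ∂μ) ≤ ENNReal.ofReal ((B ^ 2 * (2 * m)) ^ m) := by
    intro m hm
    have hp : (1:ℝ) ≤ (2 * m : ℕ) := by exact_mod_cast Nat.one_le_iff_ne_zero.2 (by omega)
    have h := hmom ((2 * m : ℕ) : ℝ) hp
    have h1 : ∀ x : ℝ, |x| ^ (((2 * m : ℕ) : ℝ)) = (x ^ 2) ^ m := by
      intro x
      rw [Real.rpow_natCast]
      rw [pow_mul, sq_abs]
    have h2 : (B * Real.sqrt ((2 * m : ℕ) : ℝ)) ^ (((2 * m : ℕ) : ℝ))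
        = (B ^ 2 * (2 * m)) ^ m := by
      rw [Real.rpow_natCast]
      rw [pow_mul]
      congr 1
      rw [mul_pow, Real.sq_sqrt (by positivity)]
      push_cast; ring
    simp_rw [h1, h2] at h
    exact h
  -- finiteness of the gaussian-type lintegral
  have hgauss : (∫⁻ ω, ENNReal.ofReal (Real.exp (lam * ζ ω ^ 2)) ∂μ) ≤ 2 := by
    have hser : ∀ x : ℝ, Real.exp (lam * x ^ 2)
        = ∑' n : ℕ, (lam * x ^ 2) ^ n / n.factorial := by
      intro x
      rw [Real.exp_eq_exp_ℝ, NormedSpace.exp_eq_tsum_div]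
    have hterm_nonneg : ∀ (x : ℝ) (n : ℕ), 0 ≤ (lam * x ^ 2) ^ n / n.factorial := by
      intro x n; positivity
    calc (∫⁻ ω, ENNReal.ofReal (Real.exp (lam * ζ ω ^ 2)) ∂μ)
        = ∫⁻ ω, ∑' n : ℕ, ENNReal.ofReal ((lam * ζ ω ^ 2) ^ n / n.factorial) ∂μ := by
          congr 1; funext ω
          rw [hser (ζ ω), ENNReal.ofReal_tsum_of_nonneg (hterm_nonneg (ζ ω))
            (Real.summable_pow_div_factorial _)]
      _ = ∑' n : ℕ, ∫⁻ ω, ENNReal.ofReal ((lam * ζ ω ^ 2) ^ n / n.factorial) ∂μ := by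
          rw [lintegral_tsum]
          intro n
          apply Measurable.aemeasurable
          apply ENNReal.measurable_ofReal.comp
          fun_prop
      _ ≤ ∑' n : ℕ, (ENNReal.ofReal (1 / 2)) ^ n := by
          apply ENNReal.tsum_le_tsum
          intro n
          rcases Nat.eq_zero_or_pos n with hn | hn
          · subst hn; simp
          · have key : ∀ x : ℝ, (lam * x ^ 2) ^ n / n.factorial
                = (lam ^ n / n.factorial) * (x ^ 2) ^ n := by
              intro x; rw [mul_pow]; ring
            simp_rw [key]
            have hcm : (0:ℝ) ≤ lam ^ n / n.factorial := by positivity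
            calc ∫⁻ ω, ENNReal.ofReal ((lam ^ n / n.factorial) * (ζ ω ^ 2) ^ n) ∂μ
                = ENNReal.ofReal (lam ^ n / n.factorial)
                    * ∫⁻ ω, ENNReal.ofReal ((ζ ω ^ 2) ^ n) ∂μ := by
                  simp_rw [ENNReal.ofReal_mul hcm]
                  rw [lintegral_const_mul]
                  apply ENNReal.measurable_ofReal.comp; fun_prop
              _ ≤ ENNReal.ofReal (lam ^ n / n.factorial)
                    * ENNReal.ofReal ((B ^ 2 * (2 * n)) ^ n) := by
                  exact mul_le_mul_right (hmom2 n hn) _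
              _ = ENNReal.ofReal ((lam ^ n / n.factorial) * (B ^ 2 * (2 * n)) ^ n) := by
                  rw [← ENNReal.ofReal_mul hcm]
              _ ≤ (ENNReal.ofReal (1 / 2)) ^ n := by
                  rw [← ENNReal.ofReal_pow (by norm_num)]
                  apply ENNReal.ofReal_le_ofReal
                  have hfac : (0:ℝ) < n.factorial := by positivity
                  have hkey : (lam * (B ^ 2 * 2)) ^ n * ((n:ℝ) ^ n)
                      ≤ (lam * (B ^ 2 * 2)) ^ n * (Real.exp 1 ^ n * n.factorial) := by
                    apply mul_le_mul_of_nonneg_left (pow_self_le_exp_pow_mul_factorial n)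
                    positivity
                  have hhalf : lam * (B ^ 2 * 2) * Real.exp 1 = 1 / 2 := by
                    rw [hlam_def]
                    have h1 := Real.exp_pos 1
                    field_simp
                    ring
                  rw [div_mul_eq_mul_div, div_le_iff₀ hfac]
                  calc lam ^ n * (B ^ 2 * (2 * n)) ^ n
                      = (lam * (B ^ 2 * 2)) ^ n * (n:ℝ) ^ n := by
                        rw [← mul_pow, ← mul_pow]; congr 1; ring
                    _ ≤ (lam * (B ^ 2 * 2)) ^ n * (Real.exp 1 ^ n * n.factorial) := hkey
                    _ = (lam * (B ^ 2 * 2) * Real.exp 1) ^ n * n.factorial := by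
                        rw [← mul_assoc, ← mul_pow]
                    _ = (1 / 2) ^ n * n.factorial := by rw [hhalf]
      _ ≤ 2 := by
          rw [ENNReal.tsum_geometric]
          have h12 : ENNReal.ofReal (1/2) = 2⁻¹ := by
            rw [show (1:ℝ)/2 = (2:ℝ)⁻¹ by norm_num, ENNReal.ofReal_inv_of_pos (by norm_num)]
            norm_num
          rw [h12, ENNReal.one_sub_inv_two, inv_inv]
  -- now dominate exp (c * x) ≤ exp (c^2/(4 lam)) * exp (lam * x^2)
  have hdom : ∀ x : ℝ, Real.exp (c * x)
      ≤ Real.exp (c ^ 2 / (4 * lam)) * Real.exp (lam * x ^ 2) := by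
    intro x
    rw [← Real.exp_add]
    apply Real.exp_le_exp.2
    rw [div_add' _ _ _ (by positivity : (4:ℝ) * lam ≠ 0), le_div_iff₀ (by positivity)]
    nlinarith [sq_nonneg (c - 2 * lam * x)]
  constructor
  · exact (Real.continuous_exp.measurable.comp (by fun_prop)).aestronglyMeasurable
  · rw [hasFiniteIntegral_iff_norm]
    calc (∫⁻ ω, ENNReal.ofReal ‖Real.exp (c * ζ ω)‖ ∂μ)
        ≤ ∫⁻ ω, ENNReal.ofReal (Real.exp (c ^ 2 / (4 * lam)))
            * ENNReal.ofReal (Real.exp (lam * ζ ω ^ 2)) ∂μ := by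
          apply lintegral_mono
          intro ω
          dsimp only
          rw [Real.norm_eq_abs, abs_of_pos (Real.exp_pos _),
            ← ENNReal.ofReal_mul (Real.exp_pos _).le]
          exact ENNReal.ofReal_le_ofReal (hdom (ζ ω))
      _ = ENNReal.ofReal (Real.exp (c ^ 2 / (4 * lam)))
            * ∫⁻ ω, ENNReal.ofReal (Real.exp (lam * ζ ω ^ 2)) ∂μ := by
          rw [lintegral_const_mul]
          apply ENNReal.measurable_ofReal.comp; fun_prop
      _ ≤ ENNReal.ofReal (Real.exp (c ^ 2 / (4 * lam))) * 2 := mul_le_mul_right hgauss _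
      _ < ⊤ := by
          exact ENNReal.mul_lt_top ENNReal.ofReal_lt_top (by norm_num)

section KernAux


/-- Fejér-type kernel. -/
def kern (T y : ℝ) : ℝ := ∫ θ in (-T)..T, (1 - |θ| / T) * Real.cos (2 * Real.pi * θ * y)

lemma kern_def (T y : ℝ) :
    kern T y = ∫ θ in (-T)..T, (1 - |θ| / T) * Real.cos (2 * Real.pi * θ * y) := rfl

lemma kern_cont (T y : ℝ) :
    Continuous fun θ : ℝ => (1 - |θ| / T) * Real.cos (2 * Real.pi * θ * y) := by
  fun_prop

lemma kern_half (T y : ℝ) :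
    kern T y = 2 * ∫ θ in (0:ℝ)..T, (1 - |θ| / T) * Real.cos (2 * Real.pi * θ * y) := by
  have heven : ∀ θ : ℝ, (1 - |(-θ)| / T) * Real.cos (2 * Real.pi * (-θ) * y)
      = (1 - |θ| / T) * Real.cos (2 * Real.pi * θ * y) := by
    intro θ
    rw [abs_neg]
    congr 1
    rw [show 2 * Real.pi * (-θ) * y = -(2 * Real.pi * θ * y) by ring, Real.cos_neg]
  have h1 : (∫ θ in (-T)..(0:ℝ), (1 - |θ| / T) * Real.cos (2 * Real.pi * θ * y))
      = ∫ θ in (0:ℝ)..T, (1 - |θ| / T) * Real.cos (2 * Real.pi * θ * y) := by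
    have h := intervalIntegral.integral_comp_neg (a := (0:ℝ)) (b := T)
      (f := fun θ => (1 - |θ| / T) * Real.cos (2 * Real.pi * θ * y))
    simp only [heven, neg_zero] at h
    exact h.symm
  rw [kern, ← intervalIntegral.integral_add_adjacent_intervals
    ((kern_cont T y).intervalIntegrable (-T) 0) ((kern_cont T y).intervalIntegrable 0 T), h1]
  ring

lemma kern_zero {T : ℝ} (hT : 0 < T) : kern T 0 = T := by
  rw [kern_half]
  have h1 : (∫ θ in (0:ℝ)..T, (1 - |θ| / T) * Real.cos (2 * Real.pi * θ * 0))
      = ∫ θ in (0:ℝ)..T, (1 - θ / T) := by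
    apply intervalIntegral.integral_congr
    intro θ hθ
    rw [Set.uIcc_of_le hT.le] at hθ
    show (1 - |θ| / T) * Real.cos (2 * Real.pi * θ * 0) = 1 - θ / T
    rw [abs_of_nonneg hθ.1, mul_zero, Real.cos_zero, mul_one]
  rw [h1]
  have hd : ∀ x ∈ Set.uIcc (0:ℝ) T, HasDerivAt (fun θ => θ - θ^2/(2*T)) (1 - x / T) x := by
    intro x _
    have h := (hasDerivAt_id x).sub (((hasDerivAt_id x).pow 2).div_const (2*T))
    refine h.congr_deriv ?_
    simp only [id]
    field_simp
    ring
  rw [intervalIntegral.integral_eq_sub_of_hasDerivAt hd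
    ((by fun_prop : Continuous fun x : ℝ => 1 - x / T).intervalIntegrable _ _)]
  field_simp
  ring

lemma kern_eq {T : ℝ} (hT : 0 < T) {y : ℝ} (hy : y ≠ 0) :
    kern T y = Real.sin (Real.pi * T * y) ^ 2 / (Real.pi ^ 2 * y ^ 2 * T) := by
  have hπ := Real.pi_pos
  have hπ0 : Real.pi ≠ 0 := Real.pi_ne_zero
  have hT0 : T ≠ 0 := hT.ne'
  set a : ℝ := 2 * Real.pi * y with ha
  have ha0 : a ≠ 0 := by rw [ha]; exact mul_ne_zero (by positivity) hy
  rw [kern_half]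
  have h1 : (∫ θ in (0:ℝ)..T, (1 - |θ| / T) * Real.cos (2 * Real.pi * θ * y))
      = ∫ θ in (0:ℝ)..T, (1 - θ / T) * Real.cos (a * θ) := by
    apply intervalIntegral.integral_congr
    intro θ hθ
    rw [Set.uIcc_of_le hT.le] at hθ
    show (1 - |θ| / T) * Real.cos (2 * Real.pi * θ * y) = (1 - θ / T) * Real.cos (a * θ)
    rw [abs_of_nonneg hθ.1, show 2 * Real.pi * θ * y = a * θ by rw [ha]; ring]
  rw [h1]
  have hd : ∀ x ∈ Set.uIcc (0:ℝ) T, HasDerivAt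
      (fun θ => (1 - θ / T) * (Real.sin (a * θ) / a) - Real.cos (a * θ) / (a ^ 2 * T))
      ((1 - x / T) * Real.cos (a * x)) x := by
    intro x _
    have hsin : HasDerivAt (fun θ : ℝ => Real.sin (a * θ)) (Real.cos (a * x) * a) x := by
      have h := (Real.hasDerivAt_sin (a * x)).comp x ((hasDerivAt_id x).const_mul a)
      simpa [Function.comp_def] using h
    have hcos : HasDerivAt (fun θ : ℝ => Real.cos (a * θ)) (-Real.sin (a * x) * a) x := by
      have h := (Real.hasDerivAt_cos (a * x)).comp x ((hasDerivAt_id x).const_mul a)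
      simpa [Function.comp_def] using h
    have hlin : HasDerivAt (fun θ : ℝ => 1 - θ / T) (-(1 / T)) x := by
      simpa using ((hasDerivAt_id x).div_const T).const_sub 1
    have h := (hlin.mul (hsin.div_const a)).sub (hcos.div_const (a ^ 2 * T))
    refine h.congr_deriv ?_
    field_simp
    ring
  rw [intervalIntegral.integral_eq_sub_of_hasDerivAt hd
    ((by fun_prop : Continuous fun x : ℝ => (1 - x / T) * Real.cos (a * x)).intervalIntegrable _ _)]
  have hsq : Real.sin (Real.pi * T * y) ^ 2 = 1 / 2 - Real.cos (a * T) / 2 := by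
    rw [Real.sin_sq_eq_half_sub]
    congr 2
    rw [ha]; ring
  rw [mul_zero, Real.sin_zero, Real.cos_zero, hsq, ha]
  field_simp
  ring

lemma kern_nonneg {T : ℝ} (hT : 0 < T) (y : ℝ) : 0 ≤ kern T y := by
  rcases eq_or_ne y 0 with hy | hy
  · rw [hy, kern_zero hT]; exact hT.le
  · rw [kern_eq hT hy]; positivity

lemma kern_le {T : ℝ} (hT : 0 < T) (y : ℝ) : kern T y ≤ T := by
  rcases eq_or_ne y 0 with hy | hy
  · rw [hy, kern_zero hT]
  · rw [kern_eq hT hy, div_le_iff₀ (by positivity)]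
    nlinarith [Real.sin_sq_le_sq (x := Real.pi * T * y), Real.pi_pos, sq_nonneg (Real.pi * y)]

lemma kern_lower {T : ℝ} (hT : 0 < T) {y : ℝ} (hy : |y| < 1 / (2 * T)) :
    4 * T / Real.pi ^ 2 ≤ kern T y := by
  have hπ := Real.pi_pos
  rcases eq_or_ne y 0 with hy0 | hy0
  · rw [hy0, kern_zero hT, div_le_iff₀ (by positivity)]
    have h9 : (9:ℝ) ≤ Real.pi ^ 2 := by nlinarith [Real.pi_gt_three]
    nlinarith
  · rw [kern_eq hT hy0, le_div_iff₀ (by positivity)]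
    have habs : Real.sin (Real.pi * T * y) ^ 2 = Real.sin (Real.pi * T * |y|) ^ 2 := by
      rcases abs_cases y with ⟨h, _⟩ | ⟨h, _⟩
      · rw [h]
      · rw [h, show Real.pi * T * (-y) = -(Real.pi * T * y) by ring, Real.sin_neg]
        ring
    have hz1 : 0 ≤ Real.pi * T * |y| := by positivity
    have hz2 : Real.pi * T * |y| ≤ Real.pi / 2 := by
      have h2 : T * |y| ≤ 1 / 2 := by
        have := hy
        rw [lt_div_iff₀ (by positivity)] at this
        nlinarith
      calc Real.pi * T * |y| = Real.pi * (T * |y|) := by ring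
        _ ≤ Real.pi * (1 / 2) := by nlinarith
        _ = Real.pi / 2 := by ring
    have hkey := Real.mul_le_sin hz1 hz2
    have h2T : 2 / Real.pi * (Real.pi * T * |y|) = 2 * T * |y| := by field_simp
    rw [h2T] at hkey
    have hs : 2 * T * |y| ≤ Real.sin (Real.pi * T * |y|) := hkey
    have habs2 : |y| ^ 2 = y ^ 2 := sq_abs y
    have hLHS : 4 * T / Real.pi ^ 2 * (Real.pi ^ 2 * y ^ 2 * T) = 4 * T ^ 2 * y ^ 2 := by
      field_simp
    rw [hLHS, habs]
    have h0 : 0 ≤ 2 * T * |y| := by positivity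
    nlinarith [hs, h0, habs2]

end KernAux
lemma integrable_exp_sum {Ω : Type*} [MeasurableSpace Ω] {μ : Measure Ω}
    [IsProbabilityMeasure μ] {ζ : Ω → ℝ} {B : ℝ} (hB : 0 < B) (hζ : MemGammaB μ ζ B)
    {n : ℕ} {X : Fin n → Ω → ℝ} (hX : IsIIDVector μ ζ X) (u : Fin n → ℝ) :
    Integrable (fun ω => Real.exp (∑ i, X i ω * u i)) μ := by
  obtain ⟨hζm, -, -, hmom⟩ := hζ
  obtain ⟨hXm, hlaw, hindep⟩ := hX
  have hYindep : iIndepFun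
      (fun i => (fun x => x * u i) ∘ X i) μ :=
    hindep.comp (fun i x => x * u i) (fun i => by fun_prop)
  have hYm : ∀ i, Measurable ((fun x => x * u i) ∘ X i) := fun i => (hXm i).mul_const _
  have hint : ∀ i ∈ Finset.univ,
      Integrable (fun ω => Real.exp (1 * ((fun x => x * u i) ∘ X i) ω)) μ := by
    intro i _
    have hg : AEStronglyMeasurable (fun x : ℝ => Real.exp (u i * x)) (Measure.map (X i) μ) :=
      (Real.continuous_exp.comp (continuous_const.mul continuous_id)).aestronglyMeasurable
    have hg' : AEStronglyMeasurable (fun x : ℝ => Real.exp (u i * x)) (Measure.map ζ μ) :=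
      (Real.continuous_exp.comp (continuous_const.mul continuous_id)).aestronglyMeasurable
    have h1 : Integrable (fun ω => Real.exp (u i * ζ ω)) μ :=
      integrable_exp_of_moments hB hζm hmom (u i)
    have h2 : Integrable (fun x => Real.exp (u i * x)) (Measure.map (X i) μ) := by
      rw [hlaw i, integrable_map_measure hg' hζm.aemeasurable]
      exact h1
    have h3 := (integrable_map_measure hg (hXm i).aemeasurable).1 h2
    simp only [Function.comp] at h3 ⊢
    simp_rw [one_mul, mul_comm (u i)] at h3 ⊢
    exact h3
  have h := hYindep.integrable_exp_mul_sum (t := 1) hYm (s := Finset.univ) hint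
  simp only [one_mul, Finset.sum_apply, Function.comp_apply] at h
  exact h

lemma esseen_weighted {Ω : Type*} [MeasurableSpace Ω] (μ : Measure Ω) [IsProbabilityMeasure μ]
    (Q L : Ω → ℝ) (hQ : Measurable Q) (hL : Measurable L)
    (hInt : Integrable (fun ω => Real.exp (L ω)) μ)
    (t s δ : ℝ) (hs : 0 ≤ s) (hδ : 0 < δ) :
    (μ {ω | |Q ω - t| < δ ∧ s ≤ L ω}).toReal ≤
      Real.pi ^ 2 / 2 * δ * Real.exp (-s) *
        ∫ θ in (-1/δ)..(1/δ),
          ‖∫ ω, Complex.exp (((2 * Real.pi * θ * Q ω : ℝ) : ℂ) * Complex.I +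
              ((L ω : ℝ) : ℂ)) ∂μ‖ := by
  have hπ := Real.pi_pos
  set T : ℝ := 1 / (2 * δ) with hTdef
  have hT : 0 < T := by positivity
  have hδT : δ = 1 / (2 * T) := by rw [hTdef]; field_simp
  have h1δ : 1 / δ = 2 * T := by rw [hTdef]; field_simp
  -- measurable sets
  have hA : MeasurableSet {ω | |Q ω - t| < δ} :=
    measurableSet_lt ((hQ.sub measurable_const).abs) measurable_const
  have hB : MeasurableSet {ω | s ≤ L ω} := measurableSet_le measurable_const hL
  have hE : MeasurableSet {ω | |Q ω - t| < δ ∧ s ≤ L ω} := hA.inter hB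
  -- the tilted truncation g
  set g : Ω → ℝ := fun ω => if |Q ω - t| < δ then Real.exp (L ω) else 0 with hgdef
  have hg_meas : Measurable g := Measurable.ite hA hL.exp measurable_const
  have hg_nonneg : ∀ ω, 0 ≤ g ω := by
    intro ω; rw [hgdef]; dsimp only; split_ifs
    exacts [(Real.exp_pos _).le, le_refl 0]
  have hg_le : ∀ ω, g ω ≤ Real.exp (L ω) := by
    intro ω; rw [hgdef]; dsimp only; split_ifs
    exacts [le_refl _, (Real.exp_pos _).le]
  have hg_int : Integrable g μ := by
    apply hInt.mono' hg_meas.aestronglyMeasurable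
    apply ae_of_all
    intro ω
    rw [Real.norm_eq_abs, abs_of_nonneg (hg_nonneg ω)]
    exact hg_le ω
  -- Step 1 : Markov / tilting
  have step1 : (μ {ω | |Q ω - t| < δ ∧ s ≤ L ω}).toReal ≤ Real.exp (-s) * ∫ ω, g ω ∂μ := by
    rw [← Measure.real_def, ← integral_indicator_one hE, ← integral_const_mul]
    apply integral_mono ((integrable_const (1:ℝ)).indicator hE) (hg_int.const_mul _)
    intro ω
    by_cases hω : ω ∈ {ω | |Q ω - t| < δ ∧ s ≤ L ω}
    · rw [Set.indicator_of_mem hω]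
      have h1 : g ω = Real.exp (L ω) := by rw [hgdef]; exact if_pos hω.1
      dsimp only
      rw [h1, ← Real.exp_add]
      exact Real.one_le_exp (by linarith [hω.2])
    · rw [Set.indicator_of_notMem hω]
      dsimp only
      exact mul_nonneg (Real.exp_pos _).le (hg_nonneg ω)
  -- measurability of the composed kernel
  have hkQ_meas : Measurable fun ω => kern T (Q ω - t) := by
    have heq : (fun ω => kern T (Q ω - t)) = fun ω =>
        if Q ω - t = 0 then T
        else Real.sin (Real.pi * T * (Q ω - t)) ^ 2 / (Real.pi ^ 2 * (Q ω - t) ^ 2 * T) := by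
      funext ω
      split_ifs with h
      · rw [h, kern_zero hT]
      · rw [kern_eq hT h]
    rw [heq]
    have hQt : Measurable fun ω => Q ω - t := hQ.sub measurable_const
    exact Measurable.ite (hQt (measurableSet_singleton 0)) measurable_const (by fun_prop)
  have hke_int : Integrable (fun ω => kern T (Q ω - t) * Real.exp (L ω)) μ := by
    apply (hInt.const_mul T).mono'
      ((hkQ_meas.mul hL.exp).aestronglyMeasurable)
    apply ae_of_all
    intro ω
    simp only [Pi.mul_apply]
    rw [Real.norm_eq_abs, abs_of_nonneg (mul_nonneg (kern_nonneg hT _) (Real.exp_pos _).le)]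
    exact mul_le_mul_of_nonneg_right (kern_le hT _) (Real.exp_pos _).le
  -- Step 2 : pointwise domination by the kernel
  have step2 : (∫ ω, g ω ∂μ)
      ≤ (Real.pi ^ 2 / (4 * T)) * ∫ ω, kern T (Q ω - t) * Real.exp (L ω) ∂μ := by
    rw [← integral_const_mul]
    apply integral_mono hg_int (hke_int.const_mul _)
    intro ω
    dsimp only
    by_cases hω : |Q ω - t| < δ
    · rw [hgdef]; dsimp only; rw [if_pos hω]
      have hk := kern_lower hT (y := Q ω - t) (by rw [← hδT]; exact hω)
      have he := (Real.exp_pos (L ω)).le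
      have hc : (0:ℝ) < Real.pi ^ 2 / (4 * T) := by positivity
      calc Real.exp (L ω)
          = (Real.pi ^ 2 / (4 * T)) * ((4 * T / Real.pi ^ 2) * Real.exp (L ω)) := by
            have hone : Real.pi ^ 2 / (4 * T) * (4 * T / Real.pi ^ 2) = 1 := by
              field_simp
            rw [← mul_assoc, hone, one_mul]
        _ ≤ (Real.pi ^ 2 / (4 * T)) * (kern T (Q ω - t) * Real.exp (L ω)) := by
            exact mul_le_mul_of_nonneg_left (mul_le_mul_of_nonneg_right hk he) hc.le
    · rw [hgdef]; dsimp only; rw [if_neg hω]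
      exact mul_nonneg (by positivity) (mul_nonneg (kern_nonneg hT _) (Real.exp_pos _).le)
  -- complex exponential helpers
  have hnorm : ∀ x r : ℝ, ‖Complex.exp ((x:ℂ) * Complex.I + (r:ℂ))‖ = Real.exp r := by
    intro x r
    rw [Complex.norm_exp]
    congr 1
    simp
  have hmeasV : ∀ θ : ℝ, Measurable fun ω =>
      Complex.exp (((2 * Real.pi * θ * Q ω : ℝ) : ℂ) * Complex.I + ((L ω : ℝ) : ℂ)) := by
    intro θ
    apply Complex.measurable_exp.comp
    exact ((Complex.measurable_ofReal.comp (hQ.const_mul (2 * Real.pi * θ))).mul_const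
      Complex.I).add (Complex.measurable_ofReal.comp hL)
  have hmeasW : ∀ θ : ℝ, Measurable fun ω =>
      Complex.exp (((2 * Real.pi * θ * (Q ω - t) : ℝ) : ℂ) * Complex.I + ((L ω : ℝ) : ℂ)) := by
    intro θ
    apply Complex.measurable_exp.comp
    exact ((Complex.measurable_ofReal.comp ((hQ.sub measurable_const).const_mul
      (2 * Real.pi * θ))).mul_const Complex.I).add (Complex.measurable_ofReal.comp hL)
  have hWint : ∀ θ : ℝ, Integrable (fun ω =>
      Complex.exp (((2 * Real.pi * θ * (Q ω - t) : ℝ) : ℂ) * Complex.I + ((L ω : ℝ) : ℂ))) μ := by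
    intro θ
    apply hInt.mono' (hmeasW θ).aestronglyMeasurable
    apply ae_of_all
    intro ω
    rw [hnorm]
  -- the characteristic-like function and its continuity
  set φ : ℝ → ℝ := fun θ =>
    ‖∫ ω, Complex.exp (((2 * Real.pi * θ * Q ω : ℝ) : ℂ) * Complex.I +
        ((L ω : ℝ) : ℂ)) ∂μ‖ with hφdef
  have hφ_cont : Continuous φ := by
    rw [hφdef]
    apply Continuous.norm
    apply continuous_of_dominated (bound := fun ω => Real.exp (L ω))
    · intro θ; exact (hmeasV θ).aestronglyMeasurable
    · intro θ
      apply ae_of_all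
      intro ω
      rw [hnorm]
    · exact hInt
    · apply ae_of_all
      intro ω
      fun_prop
  have hφ_nonneg : ∀ θ, 0 ≤ φ θ := fun θ => norm_nonneg _
  -- Fubini setup
  set ν : Measure ℝ := volume.restrict (Set.Ioc (-T) T) with hνdef
  set F : Ω → ℝ → ℝ := fun ω θ =>
    (1 - |θ| / T) * Real.cos (2 * Real.pi * θ * (Q ω - t)) * Real.exp (L ω) with hFdef
  have hFm : Measurable (Function.uncurry F) := by
    rw [hFdef]
    have m1 : Measurable fun p : Ω × ℝ => 1 - |p.2| / T :=
      (measurable_snd.abs.div_const T).const_sub 1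
    have m2 : Measurable fun p : Ω × ℝ => Real.cos (2 * Real.pi * p.2 * (Q p.1 - t)) :=
      Real.measurable_cos.comp ((measurable_snd.const_mul (2 * Real.pi)).mul
        ((hQ.comp measurable_fst).sub measurable_const))
    have m3 : Measurable fun p : Ω × ℝ => Real.exp (L p.1) :=
      (hL.comp measurable_fst).exp
    exact (m1.mul m2).mul m3
  have hbound_int : Integrable (fun p : Ω × ℝ => Real.exp (L p.1) * (1 + |p.2| / T))
      (μ.prod ν) := by
    have hcont : Continuous fun θ : ℝ => 1 + |θ| / T := by fun_prop
    have hg2 : Integrable (fun θ : ℝ => 1 + |θ| / T) ν := hcont.integrableOn_Ioc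
    exact hInt.mul_prod hg2
  have hFint : Integrable (Function.uncurry F) (μ.prod ν) := by
    apply hbound_int.mono' hFm.aestronglyMeasurable
    apply ae_of_all
    intro p
    rw [hFdef]
    dsimp only [Function.uncurry]
    have h1 : |1 - |p.2| / T| ≤ 1 + |p.2| / T := by
      have h2 : (0:ℝ) ≤ |p.2| / T := by positivity
      rw [abs_le]
      constructor <;> linarith
    have h2 : |Real.cos (2 * Real.pi * p.2 * (Q p.1 - t))| ≤ 1 := Real.abs_cos_le_one _
    rw [Real.norm_eq_abs, abs_mul, abs_mul, abs_of_pos (Real.exp_pos _)]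
    have he := (Real.exp_pos (L p.1)).le
    calc |1 - |p.2| / T| * |Real.cos (2 * Real.pi * p.2 * (Q p.1 - t))| * Real.exp (L p.1)
        ≤ (1 + |p.2| / T) * 1 * Real.exp (L p.1) := by
          apply mul_le_mul_of_nonneg_right _ he
          apply mul_le_mul h1 h2 (abs_nonneg _) (by positivity)
      _ = Real.exp (L p.1) * (1 + |p.2| / T) := by ring
  have hswap := integral_integral_swap hFint
  have hkern_rep : ∀ ω, kern T (Q ω - t) * Real.exp (L ω) = ∫ θ, F ω θ ∂ν := by
    intro ω
    rw [hFdef]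
    dsimp only
    rw [kern_def, intervalIntegral.integral_of_le (by linarith : -T ≤ T), hνdef,
      ← integral_mul_const]
  have key3 : (∫ ω, kern T (Q ω - t) * Real.exp (L ω) ∂μ) = ∫ θ, (∫ ω, F ω θ ∂μ) ∂ν := by
    have h : (fun ω => kern T (Q ω - t) * Real.exp (L ω)) = fun ω => ∫ θ, F ω θ ∂ν :=
      funext hkern_rep
    rw [h]
    exact hswap
  -- Step 4 : pointwise bound on the inner integral
  have hpt : ∀ θ ∈ Set.Ioc (-T) T, (∫ ω, F ω θ ∂μ) ≤ φ θ := by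
    intro θ hθ
    have habsθ : |θ| ≤ T := abs_le.2 ⟨hθ.1.le, hθ.2⟩
    have hc0 : 0 ≤ 1 - |θ| / T := by
      rw [sub_nonneg, div_le_one hT]; exact habsθ
    have hc1 : 1 - |θ| / T ≤ 1 := by
      have h2 : (0:ℝ) ≤ |θ| / T := by positivity
      linarith
    set W := ∫ ω, Complex.exp (((2 * Real.pi * θ * (Q ω - t) : ℝ) : ℂ) * Complex.I +
        ((L ω : ℝ) : ℂ)) ∂μ with hWdef
    have hre : (∫ ω, Real.cos (2 * Real.pi * θ * (Q ω - t)) * Real.exp (L ω) ∂μ) = W.re := by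
      have hptre : ∀ ω, Real.cos (2 * Real.pi * θ * (Q ω - t)) * Real.exp (L ω)
          = (Complex.exp (((2 * Real.pi * θ * (Q ω - t) : ℝ) : ℂ) * Complex.I +
              ((L ω : ℝ) : ℂ))).re := by
        intro ω
        rw [Complex.exp_add, ← Complex.ofReal_exp, Complex.mul_re,
          Complex.exp_ofReal_mul_I_re, Complex.ofReal_re, Complex.ofReal_im, mul_zero,
          sub_zero]
      simp_rw [hptre]
      rw [hWdef, ← RCLike.re_to_complex]
      rw [← integral_re (hWint θ)]
      simp [RCLike.re_to_complex]
    have habs_re : |W.re| ≤ ‖W‖ := Complex.abs_re_le_norm W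
    have hWnorm : ‖W‖ = φ θ := by
      rw [hφdef]
      dsimp only
      rw [hWdef]
      have hfactor : ∀ ω, Complex.exp (((2 * Real.pi * θ * (Q ω - t) : ℝ) : ℂ) * Complex.I +
            ((L ω : ℝ) : ℂ))
          = Complex.exp (((-(2 * Real.pi * θ * t) : ℝ) : ℂ) * Complex.I) *
              Complex.exp (((2 * Real.pi * θ * Q ω : ℝ) : ℂ) * Complex.I + ((L ω : ℝ) : ℂ)) := by
        intro ω
        rw [← Complex.exp_add]
        congr 1
        push_cast
        ring
      simp_rw [hfactor]
      rw [integral_const_mul, norm_mul, Complex.norm_exp_ofReal_mul_I, one_mul]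
    have hsplit : (∫ ω, F ω θ ∂μ)
        = (1 - |θ| / T) * ∫ ω, Real.cos (2 * Real.pi * θ * (Q ω - t)) * Real.exp (L ω) ∂μ := by
      rw [hFdef]
      dsimp only
      rw [← integral_const_mul]
      congr 1
      funext ω
      ring
    rw [hsplit, hre, ← hWnorm]
    nlinarith [abs_le.1 habs_re]
  have hinner_int : Integrable (fun θ => ∫ ω, F ω θ ∂μ) ν := by
    have h := hFint.integral_prod_right
    simpa [Function.uncurry] using h
  have hφ_int : IntegrableOn φ (Set.Ioc (-T) T) := hφ_cont.integrableOn_Ioc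
  have step5 : (∫ θ, (∫ ω, F ω θ ∂μ) ∂ν) ≤ ∫ θ in Set.Ioc (-T) T, φ θ := by
    rw [hνdef]
    exact setIntegral_mono_on hinner_int hφ_int measurableSet_Ioc hpt
  have step6 : (∫ θ in Set.Ioc (-T) T, φ θ) ≤ ∫ θ in (-1/δ)..(1/δ), φ θ := by
    rw [← intervalIntegral.integral_of_le (by linarith : -T ≤ T)]
    apply intervalIntegral.integral_mono_interval (by rw [neg_div, h1δ]; linarith)
      (by linarith) (by rw [h1δ]; linarith)
      (ae_of_all _ hφ_nonneg) (hφ_cont.intervalIntegrable _ _)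
  have hint_nonneg : 0 ≤ ∫ θ in (-1/δ)..(1/δ), φ θ := by
    apply intervalIntegral.integral_nonneg (by rw [neg_div, h1δ]; linarith)
    intro θ _
    exact hφ_nonneg θ
  have hconst : Real.pi ^ 2 / (4 * T) = Real.pi ^ 2 / 2 * δ := by
    rw [hTdef]
    field_simp
    ring
  calc (μ {ω | |Q ω - t| < δ ∧ s ≤ L ω}).toReal
      ≤ Real.exp (-s) * ∫ ω, g ω ∂μ := step1
    _ ≤ Real.exp (-s) * ((Real.pi ^ 2 / (4 * T)) *
        ∫ ω, kern T (Q ω - t) * Real.exp (L ω) ∂μ) :=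
        mul_le_mul_of_nonneg_left step2 (Real.exp_pos _).le
    _ = Real.exp (-s) * ((Real.pi ^ 2 / (4 * T)) * ∫ θ, (∫ ω, F ω θ ∂μ) ∂ν) := by rw [key3]
    _ ≤ Real.exp (-s) * ((Real.pi ^ 2 / (4 * T)) * ∫ θ in Set.Ioc (-T) T, φ θ) := by
        apply mul_le_mul_of_nonneg_left _ (Real.exp_pos _).le
        exact mul_le_mul_of_nonneg_left step5 (by positivity)
    _ ≤ Real.exp (-s) * ((Real.pi ^ 2 / (4 * T)) * ∫ θ in (-1/δ)..(1/δ), φ θ) := by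
        apply mul_le_mul_of_nonneg_left _ (Real.exp_pos _).le
        exact mul_le_mul_of_nonneg_left step6 (by positivity)
    _ = Real.pi ^ 2 / 2 * δ * Real.exp (-s) * ∫ θ in (-1/δ)..(1/δ), φ θ := by
        rw [hconst]; ring

end AuxLemmas

/-- **Lemma (tilted Esseen inequality).**
For every `B > 0` there exists `C > 0` depending only on `B` such that: for every
`ζ ∈ Γ_B`, every random vector `X ∈ ℝ^n` with i.i.d. coordinates distributed as `ζ`,
every `n × n` real symmetric matrix `M`, `u ∈ ℝ^n`, `t ∈ ℝ`, `s ≥ 0` and `δ > 0`: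
`ℙ(|⟨MX,X⟩ − t| < δ ∧ ⟨X,u⟩ ≥ s) ≤ C δ e^{-s} ∫_{-1/δ}^{1/δ} |𝔼 e^{2πiθ⟨MX,X⟩ + ⟨X,u⟩}| dθ`. -/
theorem tilted_esseen (B : ℝ) (hB : 0 < B) :
    ∃ C : ℝ, 0 < C ∧
      ∀ (Ω : Type) [MeasurableSpace Ω] (μ : Measure Ω), IsProbabilityMeasure μ →
        ∀ (ζ : Ω → ℝ), MemGammaB μ ζ B →
          ∀ (n : ℕ) (X : Fin n → Ω → ℝ), IsIIDVector μ ζ X →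
            ∀ (M : Matrix (Fin n) (Fin n) ℝ), M.IsSymm →
              ∀ (u : Fin n → ℝ) (t s δ : ℝ), 0 ≤ s → 0 < δ →
                (μ {ω | |(∑ i, M.mulVec (fun j => X j ω) i * X i ω) - t| < δ ∧
                    s ≤ ∑ i, X i ω * u i}).toReal ≤
                  C * δ * Real.exp (-s) *
                    ∫ θ in (-1/δ)..(1/δ),
                      ‖∫ ω, Complex.exp
                          (((2 * Real.pi * θ * (∑ i, M.mulVec (fun j => X j ω) i * X i ω) : ℝ) : ℂ)
                              * Complex.I +
                            ((∑ i, X i ω * u i : ℝ) : ℂ)) ∂μ‖ := by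
  
  refine ⟨Real.pi ^ 2 / 2, by positivity, ?_⟩
  intro Ω _ μ hμ ζ hζ n X hX M hM u t s δ hs hδ
  haveI := hμ
  have hXm := hX.1
  have hQm : Measurable fun ω => ∑ i, M.mulVec (fun j => X j ω) i * X i ω := by
    apply Finset.measurable_sum
    intro i _
    apply Measurable.mul _ (hXm i)
    have h : (fun ω => M.mulVec (fun j => X j ω) i) = fun ω => ∑ j, M i j * X j ω := by
      funext ω
      simp [Matrix.mulVec, dotProduct]
    rw [h]
    exact Finset.measurable_sum _ (fun j _ => (hXm j).const_mul _)
  have hLm : Measurable fun ω => ∑ i, X i ω * u i :=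
    Finset.measurable_sum _ fun i _ => (hXm i).mul_const _
  have hInt : Integrable (fun ω => Real.exp (∑ i, X i ω * u i)) μ :=
    integrable_exp_sum hB hζ hX u
  exact esseen_weighted μ (fun ω => ∑ i, M.mulVec (fun j => X j ω) i * X i ω)
    (fun ω => ∑ i, X i ω * u i) hQm hLm hInt t s δ hs hδ
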